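/- For every a ≥ 0 and t = 2^a, the square ROD A_t coincides with the Adams–Lax–Phillips Octonion design O_t^{(O)}; equivalently, for every k < ρ(t), the k-th dispersion matrix of A_t equals the k-th dispersion matrix of O_t^{(O)}. Here A_t has dispersion matrices D_k^{(t)} given by D_k^{(t)}(i,j) = (−1)^{|i ∧ χ_t(k)|} if i ⊕ j = γ_t(k) and 0 otherwise, where (γ_t, χ_t) are the maps γ_t(8l+m) = t(1 − 2^{−l}) + 8^l·m and χ_t(8l+m) = 0 if l = 0, m = 0; t·2^{−l} if l ≠ 0, m = 0; 8^l·ψ̂_{2^d}(m) if l = c, m ≠ 0; t·2^{−l−1} + 8^l·ψ̂_8(m) if l ≠ c, m ≠ 0 (with a = 4c + d, 0 ≤ d ≤ 3). The family O_t^{(O)} is defined recursively: for t ∈ {1,2,4,8}, its k-th dispersion matrix is E_k^{(t)} with E_k^{(t)}(i,j) = (−1)^{|i ∧ ψ̂_t(k)|} if i ⊕ j = k and 0 otherwise (the design K_t); and for t = 16n (n = 2^b), ρ(16n) = ρ(n) + 8 and its dispersion matrices are, for k < 8, the block matrix [[I_n ⊗ E_k^{(8)}, 0],[0, I_n ⊗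 (E_k^{(8)})ᵀ]], and, for 8 ≤ k < ρ(n) + 8, the block matrix [[0, D′_{k−8} ⊗ I_8],[−(D′_{k−8})ᵀ ⊗ I_8, 0]], where D′_0,…,D′_{ρ(n)−1} are the dispersion matrices of O_n^{(O)} and ⊗ is the Kronecker product. -/

import Mathlib

/-- Hamming weight (popcount) of a natural number. -/
def hw (x : ℕ) : ℕ := (Nat.digits 2 x).sum

/-- Hurwitz–Radon number of `2^a`. -/
def rhoExp (a : ℕ) : ℕ := 8 * (a / 4) + 2 ^ (a % 4)

/-- The permutation `φ₁` of `{0,…,7}` sending `(0,1,2,3,4,5,6,7)` to `(0,1,2,3,4,7,5,6)`. -/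
def phi1 : ℕ → ℕ
  | 5 => 7
  | 6 => 5
  | 7 => 6
  | x => x

/-- `ψ̂_{2^e}(m) = (2^e − φ₁(m)) mod 2^e`. -/
def psiHat (e m : ℕ) : ℕ := (2 ^ e - phi1 m) % 2 ^ e

/-- Adams–Lax–Phillips (Octonion) map `γ_t(8l+m) = t(1 − 2^{−l}) + 8^l·m` for `t = 2^a`. -/
def gammaO (a x : ℕ) : ℕ :=
  (2 ^ a - 2 ^ a / 2 ^ (x / 8)) + 8 ^ (x / 8) * (x % 8)

/-- Adams–Lax–Phillips (Octonion) map `χ_t`: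
`χ_t(8l+m) = 0` if `l = 0, m = 0`; `t·2^{−l}` if `l ≠ 0, m = 0`;
`8^l·ψ̂_{2^d}(m)` if `l = c, m ≠ 0`; `t·2^{−l−1} + 8^l·ψ̂_8(m)` if `l ≠ c, m ≠ 0`
(where `t = 2^a`, `a = 4c + d`, `0 ≤ d ≤ 3`). -/
def chiO (a x : ℕ) : ℕ :=
  let l := x / 8
  let m := x % 8
  if m = 0 then (if l = 0 then 0 else 2 ^ a / 2 ^ l)
  else if l = a / 4 then 8 ^ l * psiHat (a % 4) m
  else 2 ^ a / 2 ^ (l + 1) + 8 ^ l * psiHat 3 m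

/-- `(i,j)` entry of the `k`-th dispersion matrix of the design `A_t` (`t = 2^a`):
`(−1)^{|i ∧ χ_t(k)|}` if `i ⊕ j = γ_t(k)`, and `0` otherwise. -/
noncomputable def Ddisp (a k i j : ℕ) : ℝ :=
  if i ^^^ j = gammaO a k then ((-1 : ℝ)) ^ (hw (i &&& chiO a k)) else 0

/-- `(i,j)` entry of the `k`-th dispersion matrix `E_k^{(2^e)}` of the base design
`K_{2^e}` (`e ∈ {0,1,2,3}`): `(−1)^{|i ∧ ψ̂_{2^e}(k)|}` if `i ⊕ j = k`, else `0`. -/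
noncomputable def Edisp (e k i j : ℕ) : ℝ :=
  if i ^^^ j = k then ((-1 : ℝ)) ^ (hw (i &&& psiHat e k)) else 0

/-- `(i,j)` entry of the `k`-th dispersion matrix of the Adams–Lax–Phillips Octonion
design `O_{2^a}^{(O)}`, defined recursively: for `a ≤ 3` it is the base design `K_{2^a}`;
for `t = 16n` (`n = 2^b`, `half := t/2 = 8n`) the `k`-th dispersion matrix is, for `k < 8`,
`[[I_n ⊗ E_k^{(8)}, 0], [0, I_n ⊗ (E_k^{(8)})ᵀ]]`, and for `8 ≤ k < ρ(n) + 8`,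
`[[0, D′_{k−8} ⊗ I_8], [−(D′_{k−8})ᵀ ⊗ I_8, 0]]`, where `D′` are the dispersion matrices
of `O_n^{(O)}`. -/
noncomputable def Odisp : ℕ → ℕ → ℕ → ℕ → ℝ
  | 0, k, i, j => Edisp 0 k i j
  | 1, k, i, j => Edisp 1 k i j
  | 2, k, i, j => Edisp 2 k i j
  | 3, k, i, j => Edisp 3 k i j
  | (b + 4), k, i, j =>
    let half := 2 ^ (b + 3)
    if k < 8 then
      if i < half ∧ j < half then
        (if i / 8 = j / 8 then Edisp 3 k (i % 8) (j % 8) else 0)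
      else if half ≤ i ∧ half ≤ j then
        (if (i - half) / 8 = (j - half) / 8 then
          Edisp 3 k ((j - half) % 8) ((i - half) % 8) else 0)
      else 0
    else
      if i < half ∧ half ≤ j then
        (if i % 8 = (j - half) % 8 then Odisp b (k - 8) (i / 8) ((j - half) / 8) else 0)
      else if half ≤ i ∧ j < half then
        (if (i - half) % 8 = j % 8 then -(Odisp b (k - 8) (j / 8) ((i - half) / 8)) else 0)
      else 0


-- Auxiliary lemmas

lemma hw_zero : hw 0 = 0 := by simp [hw]

lemma hw_def (n : ℕ) : hw n = n % 2 + hw (n / 2) := by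
  rcases Nat.eq_zero_or_pos n with h | h
  · simp [h, hw]
  · unfold hw
    rw [Nat.digits_def' (by norm_num : 1 < 2) h]
    simp [Nat.add_comm]

lemma hw_two_mul_add (u r : ℕ) (hr : r < 2) : hw (2 * u + r) = r + hw u := by
  rw [hw_def (2 * u + r)]
  have h1 : (2 * u + r) % 2 = r := by omega
  have h2 : (2 * u + r) / 2 = u := by omega
  rw [h1, h2]

lemma hw_split (e a : ℕ) : ∀ x, x < 2 ^ e → hw (2 ^ e * a + x) = hw a + hw x := by
  induction e with
  | zero =>
    intro x hx
    have hx0 : x = 0 := by omega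
    subst hx0; simp [hw_zero]
  | succ e ih =>
    intro x hx
    have h2 : (2:ℕ) ^ (e + 1) = 2 * 2 ^ e := by rw [pow_succ]; ring
    have hA : 2 ^ (e + 1) * a = 2 * (2 ^ e * a) := by rw [h2]; ring
    have h1 : 2 ^ (e + 1) * a + x = 2 * (2 ^ e * a + x / 2) + x % 2 := by
      rw [hA]; omega
    rw [h1, hw_two_mul_add _ _ (by omega), ih (x / 2) (by omega), hw_def x]
    omega

lemma xor_split {e x y : ℕ} (a b : ℕ) (hx : x < 2 ^ e) (hy : y < 2 ^ e) :
    (2 ^ e * a + x) ^^^ (2 ^ e * b + y) = 2 ^ e * (a ^^^ b) + (x ^^^ y) := by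
  apply Nat.eq_of_testBit_eq; intro n
  simp only [Nat.testBit_xor, Nat.testBit_two_pow_mul_add _ hx,
    Nat.testBit_two_pow_mul_add _ hy,
    Nat.testBit_two_pow_mul_add _ (Nat.xor_lt_two_pow hx hy)]
  by_cases h : n < e <;> simp [h]

lemma and_split {e x y : ℕ} (a b : ℕ) (hx : x < 2 ^ e) (hy : y < 2 ^ e) :
    (2 ^ e * a + x) &&& (2 ^ e * b + y) = 2 ^ e * (a &&& b) + (x &&& y) := by
  apply Nat.eq_of_testBit_eq; intro n
  simp only [Nat.testBit_and, Nat.testBit_two_pow_mul_add _ hx,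
    Nat.testBit_two_pow_mul_add _ hy,
    Nat.testBit_two_pow_mul_add _ (Nat.and_lt_two_pow x hy)]
  by_cases h : n < e <;> simp [h]

lemma hw_xor_sign (x : ℕ) : ∀ y : ℕ, ((-1:ℝ)) ^ hw (x ^^^ y) = (-1) ^ hw x * (-1) ^ hw y := by
  induction x using Nat.strong_induction_on with
  | _ x ih =>
    intro y
    rcases Nat.eq_zero_or_pos x with h | h
    · subst h; simp [hw_zero]
    · have hxy2 : (x ^^^ y) / 2 = x / 2 ^^^ y / 2 := by
        apply Nat.eq_of_testBit_eq; intro n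
        simp [Nat.testBit_div_two, Nat.testBit_xor]
      have hb : ((-1:ℝ)) ^ ((x ^^^ y) % 2) = (-1) ^ (x % 2) * (-1) ^ (y % 2) := by
        rcases Nat.mod_two_eq_zero_or_one x with h1 | h1 <;>
          rcases Nat.mod_two_eq_zero_or_one y with h2 | h2 <;>
          rw [Nat.xor_mod_two_eq, Nat.add_mod, h1, h2] <;> norm_num
      rw [hw_def (x ^^^ y), hxy2, pow_add, ih (x / 2) (by omega) (y / 2), hw_def x, hw_def y,
        pow_add, pow_add, hb]
      ring

lemma neg_one_pow_odd' {n : ℕ} (h : n % 2 = 1) : ((-1:ℝ)) ^ n = -1 :=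
  Odd.neg_one_pow (Nat.odd_iff.mpr h)

lemma eight_pow (t : ℕ) : (8:ℕ) ^ t = 2 ^ (3 * t) := by
  rw [pow_mul]; norm_num

lemma two_pow_mod4_le (b : ℕ) : 2 ^ (b % 4) ≤ 8 := by
  have h : b % 4 < 4 := Nat.mod_lt _ (by norm_num)
  set d := b % 4 with hd
  interval_cases d <;> norm_num

lemma rhoExp_step (b : ℕ) : rhoExp (b + 4) = rhoExp b + 8 := by
  unfold rhoExp
  rw [Nat.add_div_right _ (by norm_num), Nat.add_mod_right]
  ring

lemma div8_le (b k : ℕ) (hk : k < rhoExp b) : k / 8 ≤ b / 4 := by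
  have := two_pow_mod4_le b; unfold rhoExp at hk; omega

lemma psiHat_lt (e m : ℕ) : psiHat e m < 2 ^ e :=
  Nat.mod_lt _ (Nat.two_pow_pos e)

lemma gamma_low_lt (b k : ℕ) (hk : k < rhoExp b) : 8 ^ (k / 8) * (k % 8) < 2 ^ (b - k / 8) := by
  have hl := div8_le b k hk
  rcases eq_or_lt_of_le hl with he | hlt
  · have hm : k % 8 < 2 ^ (b % 4) := by unfold rhoExp at hk; omega
    calc 8 ^ (k / 8) * (k % 8) < 8 ^ (k / 8) * 2 ^ (b % 4) :=
          mul_lt_mul_of_pos_left hm (pow_pos (by norm_num) _)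
      _ = 2 ^ (3 * (k / 8) + b % 4) := by rw [eight_pow, ← pow_add]
      _ ≤ 2 ^ (b - k / 8) := Nat.pow_le_pow_right (by norm_num) (by omega)
  · calc 8 ^ (k / 8) * (k % 8) < 8 ^ (k / 8) * 8 :=
          mul_lt_mul_of_pos_left (by omega) (pow_pos (by norm_num) _)
      _ = 2 ^ (3 * (k / 8) + 3) := by rw [eight_pow, pow_add]; norm_num
      _ ≤ 2 ^ (b - k / 8) := Nat.pow_le_pow_right (by norm_num) (by omega)

lemma gammaO_lt (b k : ℕ) (hk : k < rhoExp b) : gammaO b k < 2 ^ b := by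
  have hlow := gamma_low_lt b k hk
  have hl := div8_le b k hk
  have hle : (2:ℕ) ^ (b - k / 8) ≤ 2 ^ b := Nat.pow_le_pow_right (by norm_num) (by omega)
  have hdiv : (2:ℕ) ^ b / 2 ^ (k / 8) = 2 ^ (b - k / 8) := Nat.pow_div (by omega) (by norm_num)
  unfold gammaO; rw [hdiv]; omega

lemma chiO_lt (b k : ℕ) (hk : k < rhoExp b) : chiO b k < 2 ^ b := by
  have hl := div8_le b k hk
  have hpos : 0 < (2:ℕ) ^ b := Nat.two_pow_pos b
  unfold chiO
  simp only
  by_cases hm : k % 8 = 0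
  · rw [if_pos hm]
    by_cases hl0 : k / 8 = 0
    · rw [if_pos hl0]; exact hpos
    · rw [if_neg hl0]
      exact Nat.div_lt_self hpos (Nat.one_lt_two_pow hl0)
  · rw [if_neg hm]
    by_cases hc : k / 8 = b / 4
    · rw [if_pos hc]
      calc 8 ^ (k / 8) * psiHat (b % 4) (k % 8) < 8 ^ (k / 8) * 2 ^ (b % 4) :=
            mul_lt_mul_of_pos_left (psiHat_lt _ _) (pow_pos (by norm_num) _)
        _ = 2 ^ (3 * (k / 8) + b % 4) := by rw [eight_pow, ← pow_add]
        _ ≤ 2 ^ b := Nat.pow_le_pow_right (by norm_num) (by omega)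
    · rw [if_neg hc]
      have hlt : k / 8 < b / 4 := lt_of_le_of_ne hl hc
      have h1 : (2:ℕ) ^ b / 2 ^ (k / 8 + 1) = 2 ^ (b - (k / 8 + 1)) :=
        Nat.pow_div (by omega) (by norm_num)
      have h2 : 8 ^ (k / 8) * psiHat 3 (k % 8) < 2 ^ (b - (k / 8 + 1)) := by
        calc 8 ^ (k / 8) * psiHat 3 (k % 8) < 8 ^ (k / 8) * 8 :=
              mul_lt_mul_of_pos_left (psiHat_lt 3 _) (pow_pos (by norm_num) _)
          _ = 2 ^ (3 * (k / 8) + 3) := by rw [eight_pow, pow_add]; norm_num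
          _ ≤ 2 ^ (b - (k / 8 + 1)) := Nat.pow_le_pow_right (by norm_num) (by omega)
      have h3 : (2:ℕ) ^ (b - (k / 8 + 1)) + 2 ^ (b - (k / 8 + 1)) ≤ 2 ^ b := by
        have h4 : (2:ℕ) ^ (b - (k / 8 + 1)) * 2 ≤ 2 ^ b := by
          rw [← pow_succ]
          exact Nat.pow_le_pow_right (by norm_num) (by omega)
        omega
      rw [h1]; omega

lemma gammaO_step (b k : ℕ) (hk : k < rhoExp b) :
    gammaO (b + 4) (8 + k) = 2 ^ (b + 3) + 8 * gammaO b k := by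
  have hl := div8_le b k hk
  have h1 : (8 + k) / 8 = k / 8 + 1 := by omega
  have h2 : (8 + k) % 8 = k % 8 := by omega
  unfold gammaO
  rw [h1, h2]
  have e1 : (2:ℕ) ^ (b + 4) = 16 * 2 ^ b := by ring
  have e2 : (2:ℕ) ^ (b + 3) = 8 * 2 ^ b := by ring
  have e3 : (2:ℕ) ^ (b + 4) / 2 ^ (k / 8 + 1) = 8 * (2 ^ b / 2 ^ (k / 8)) := by
    rw [Nat.pow_div (by omega) (by norm_num), Nat.pow_div (by omega) (by norm_num),
      show b + 4 - (k / 8 + 1) = (b - k / 8) + 3 by omega, pow_add]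
    ring
  have e4 : (8:ℕ) ^ (k / 8 + 1) * (k % 8) = 8 * (8 ^ (k / 8) * (k % 8)) := by
    rw [pow_succ]; ring
  have e5 : 2 ^ b / 2 ^ (k / 8) ≤ 2 ^ b := Nat.div_le_self _ _
  rw [e3, e4]
  omega

lemma gammaO_zero (b : ℕ) : gammaO b 0 = 0 := by
  unfold gammaO; simp

lemma chiO_zero (b : ℕ) : chiO b 0 = 0 := by
  unfold chiO; simp

lemma chiO_step (b k : ℕ) (hk : k < rhoExp b) :
    chiO (b + 4) (8 + k) = (if k = 0 then 2 ^ (b + 3) else 0) + 8 * chiO b k := by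
  have hl := div8_le b k hk
  have h1 : (8 + k) / 8 = k / 8 + 1 := by omega
  have h2 : (8 + k) % 8 = k % 8 := by omega
  have h3 : (b + 4) / 4 = b / 4 + 1 := by omega
  have h4 : (b + 4) % 4 = b % 4 := by omega
  unfold chiO
  simp only [h1, h2, h3, h4]
  by_cases hm : k % 8 = 0
  · rw [if_pos hm, if_pos hm, if_neg (by omega : ¬ k / 8 + 1 = 0)]
    by_cases hl0 : k / 8 = 0
    · have hk0 : k = 0 := by omega
      rw [if_pos hl0, if_pos hk0, hl0]
      rw [Nat.pow_div (by omega) (by norm_num)]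
      norm_num
    · have hk0 : ¬ k = 0 := by omega
      rw [if_neg hl0, if_neg hk0]
      rw [Nat.pow_div (by omega) (by norm_num), Nat.pow_div (by omega) (by norm_num),
        show b + 4 - (k / 8 + 1) = (b - k / 8) + 3 by omega, pow_add]
      ring
  · have hk0 : ¬ k = 0 := by omega
    rw [if_neg hm, if_neg hm, if_neg hk0]
    by_cases hc : k / 8 = b / 4
    · rw [if_pos (by omega : k / 8 + 1 = b / 4 + 1), if_pos hc, pow_succ]
      ring
    · rw [if_neg (by omega : ¬ k / 8 + 1 = b / 4 + 1), if_neg hc]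
      have hlt : k / 8 < b / 4 := lt_of_le_of_ne hl hc
      rw [Nat.pow_div (by omega) (by norm_num), Nat.pow_div (by omega) (by norm_num),
        show b + 4 - (k / 8 + 1 + 1) = (b - (k / 8 + 1)) + 3 by omega, pow_add, pow_succ]
      ring

lemma hw_two_pow (e : ℕ) : hw (2 ^ e) = 1 := by
  rw [show (2:ℕ) ^ e = 2 ^ e * 1 + 0 by ring, hw_split e 1 0 (Nat.two_pow_pos e), hw_zero]
  norm_num [hw]

lemma and_mul8 (x y : ℕ) : (8 * x) &&& (8 * y) = 8 * (x &&& y) := by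
  have h := and_split (e := 3) (x := 0) (y := 0) x y (by norm_num) (by norm_num)
  simpa using h

lemma xor_mul8 (x y : ℕ) : (8 * x) ^^^ (8 * y) = 8 * (x ^^^ y) := by
  have h := xor_split (e := 3) (x := 0) (y := 0) x y (by norm_num) (by norm_num)
  simpa using h

lemma hw_mul8 (x : ℕ) : hw (8 * x) = hw x := by
  rw [show (8:ℕ) * x = 2 ^ 3 * x + 0 by ring, hw_split 3 x 0 (by norm_num), hw_zero]
  omega

lemma base_gamma_chi : ∀ b < 4, ∀ k < rhoExp b, gammaO b k = k ∧ chiO b k = psiHat b k := by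
  decide

lemma hw_and_psi3_odd : ∀ k, 0 < k → k < 8 → hw (k &&& psiHat 3 k) % 2 = 1 := by
  intro k h1 h2
  interval_cases k
  · rw [show (1 &&& psiHat 3 1 : ℕ) = 1 by decide]; norm_num [hw]
  · rw [show (2 &&& psiHat 3 2 : ℕ) = 2 by decide]; norm_num [hw]
  · rw [show (3 &&& psiHat 3 3 : ℕ) = 1 by decide]; norm_num [hw]
  · rw [show (4 &&& psiHat 3 4 : ℕ) = 4 by decide]; norm_num [hw]
  · rw [show (5 &&& psiHat 3 5 : ℕ) = 1 by decide]; norm_num [hw]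
  · rw [show (6 &&& psiHat 3 6 : ℕ) = 2 by decide]; norm_num [hw]
  · rw [show (7 &&& psiHat 3 7 : ℕ) = 2 by decide]; norm_num [hw]

lemma hw_and_psi_small_odd : ∀ b < 4, ∀ k, 0 < k → k < rhoExp b → hw (k &&& psiHat b k) % 2 = 1 := by
  intro b hb k h1 h2
  interval_cases b <;> [skip; skip; skip; exact hw_and_psi3_odd k h1 (by simpa [rhoExp] using h2)]
  · exfalso; simp [rhoExp] at h2; omega
  · have : k = 1 := by simp [rhoExp] at h2; omega
    subst this; rw [show (1 &&& psiHat 1 1 : ℕ) = 1 by decide]; norm_num [hw]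
  · have : k < 4 := by simpa [rhoExp] using h2
    interval_cases k
    · rw [show (1 &&& psiHat 2 1 : ℕ) = 1 by decide]; norm_num [hw]
    · rw [show (2 &&& psiHat 2 2 : ℕ) = 2 by decide]; norm_num [hw]
    · rw [show (3 &&& psiHat 2 3 : ℕ) = 1 by decide]; norm_num [hw]

lemma gammaO_small (b k : ℕ) (h8 : k < 8) : gammaO (b + 4) k = k := by
  unfold gammaO
  rw [Nat.div_eq_of_lt h8, Nat.mod_eq_of_lt h8]
  simp

lemma chiO_small (b k : ℕ) (hk0 : k ≠ 0) (h8 : k < 8) :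
    chiO (b + 4) k = 2 ^ (b + 3) + psiHat 3 k := by
  unfold chiO
  simp only [Nat.div_eq_of_lt h8, Nat.mod_eq_of_lt h8]
  rw [if_neg hk0, if_neg (by omega : ¬ (0 : ℕ) = (b + 4) / 4)]
  rw [Nat.pow_div (by omega) (by norm_num)]
  norm_num

lemma key_parity (b : ℕ) : ∀ k, 0 < k → k < rhoExp b → hw (gammaO b k &&& chiO b k) % 2 = 1 := by
  induction b using Nat.strong_induction_on with
  | _ b ih =>
    intro k hk0 hk
    rcases Nat.lt_or_ge b 4 with h4 | h4
    · obtain ⟨hg, hc⟩ := base_gamma_chi b h4 k hk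
      rw [hg, hc]
      exact hw_and_psi_small_odd b h4 k hk0 hk
    · obtain ⟨b', rfl⟩ : ∃ b', b = b' + 4 := ⟨b - 4, by omega⟩
      rw [rhoExp_step] at hk
      rcases Nat.lt_or_ge k 8 with h8 | h8
      · rw [gammaO_small b' k h8, chiO_small b' k (by omega) h8]
        have hpsi8 : psiHat 3 k < 2 ^ (b' + 3) := lt_of_lt_of_le (psiHat_lt 3 k)
          (Nat.pow_le_pow_right (by norm_num) (by omega))
        have hk8 : k < 2 ^ (b' + 3) := by
          have h83 : (8:ℕ) ≤ 2 ^ (b' + 3) :=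
            le_trans (by norm_num) (Nat.pow_le_pow_right (by norm_num) (by omega : 3 ≤ b' + 3))
          omega
        have key : k &&& (2 ^ (b' + 3) + psiHat 3 k) = k &&& psiHat 3 k := by
          have h := and_split (e := b' + 3) 0 1 hk8 hpsi8
          simpa using h
        rw [key]
        exact hw_and_psi3_odd k hk0 h8
      · obtain ⟨k', rfl⟩ : ∃ k', k = 8 + k' := ⟨k - 8, by omega⟩
        have hk' : k' < rhoExp b' := by omega
        rw [gammaO_step b' k' hk', chiO_step b' k' hk']
        have hglt : 8 * gammaO b' k' < 2 ^ (b' + 3) := by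
          have := gammaO_lt b' k' hk'
          have h2 : (2:ℕ) ^ (b' + 3) = 8 * 2 ^ b' := by ring
          omega
        have hclt : 8 * chiO b' k' < 2 ^ (b' + 3) := by
          have := chiO_lt b' k' hk'
          have h2 : (2:ℕ) ^ (b' + 3) = 8 * 2 ^ b' := by ring
          omega
        by_cases hk0' : k' = 0
        · subst hk0'
          rw [gammaO_zero, chiO_zero, if_pos rfl]
          simp only [Nat.mul_zero, Nat.add_zero, Nat.and_self]
          rw [hw_two_pow]
        · rw [if_neg hk0']
          have key : (2 ^ (b' + 3) + 8 * gammaO b' k') &&& (0 + 8 * chiO b' k')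
              = 8 * (gammaO b' k' &&& chiO b' k') := by
            have h := and_split (e := b' + 3) 1 0 hglt hclt
            simpa [and_mul8] using h
          rw [key, hw_mul8]
          exact ih b' (by omega) k' (by omega) hk'

lemma hw_one : hw 1 = 1 := by norm_num [hw]

lemma xor_mix (e x y : ℕ) (hx : x < 2 ^ e) (hy : y < 2 ^ e) :
    x ^^^ (2 ^ e + y) = 2 ^ e + (x ^^^ y) := by
  conv_lhs => rw [show x = 2 ^ e * 0 + x by omega, show 2 ^ e + y = 2 ^ e * 1 + y by omega]
  rw [xor_split _ _ hx hy]
  norm_num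

lemma xor_mix' (e x y : ℕ) (hx : x < 2 ^ e) (hy : y < 2 ^ e) :
    (2 ^ e + x) ^^^ y = 2 ^ e + (x ^^^ y) := by
  rw [Nat.xor_comm, xor_mix e y x hy hx, Nat.xor_comm]

lemma xor_hh (e x y : ℕ) (hx : x < 2 ^ e) (hy : y < 2 ^ e) :
    (2 ^ e + x) ^^^ (2 ^ e + y) = x ^^^ y := by
  conv_lhs => rw [show 2 ^ e + x = 2 ^ e * 1 + x by omega, show 2 ^ e + y = 2 ^ e * 1 + y by omega]
  rw [xor_split _ _ hx hy]
  simp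

lemma and_mix (e x y : ℕ) (hx : x < 2 ^ e) (hy : y < 2 ^ e) :
    x &&& (2 ^ e + y) = x &&& y := by
  conv_lhs => rw [show x = 2 ^ e * 0 + x by omega, show 2 ^ e + y = 2 ^ e * 1 + y by omega]
  rw [and_split _ _ hx hy]
  simp

lemma and_mix' (e x y : ℕ) (hx : x < 2 ^ e) (hy : y < 2 ^ e) :
    (2 ^ e + x) &&& y = x &&& y := by
  conv_lhs => rw [show 2 ^ e + x = 2 ^ e * 1 + x by omega, show y = 2 ^ e * 0 + y by omega]
  rw [and_split _ _ hx hy]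
  simp

lemma and_hh (e x y : ℕ) (hx : x < 2 ^ e) (hy : y < 2 ^ e) :
    (2 ^ e + x) &&& (2 ^ e + y) = 2 ^ e + (x &&& y) := by
  conv_lhs => rw [show 2 ^ e + x = 2 ^ e * 1 + x by omega, show 2 ^ e + y = 2 ^ e * 1 + y by omega]
  rw [and_split _ _ hx hy]
  simp

lemma hw_top (e z : ℕ) (hz : z < 2 ^ e) : hw (2 ^ e + z) = 1 + hw z := by
  rw [show 2 ^ e + z = 2 ^ e * 1 + z by omega, hw_split e 1 z hz, hw_one]

lemma xor_decomp8 (i j : ℕ) : i ^^^ j = 8 * (i / 8 ^^^ j / 8) + (i % 8 ^^^ j % 8) := by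
  conv_lhs => rw [show i = 2 ^ 3 * (i / 8) + i % 8 by omega,
    show j = 2 ^ 3 * (j / 8) + j % 8 by omega]
  rw [xor_split _ _ (by omega) (by omega)]
  norm_num

lemma and_decomp8 (i ψ : ℕ) (hψ : ψ < 8) : i &&& ψ = i % 8 &&& ψ := by
  conv_lhs => rw [show i = 2 ^ 3 * (i / 8) + i % 8 by omega, show ψ = 2 ^ 3 * 0 + ψ by omega]
  rw [and_split _ _ (by omega) (by omega)]
  simp

lemma and8_shift (i χ : ℕ) : i &&& (8 * χ) = 8 * (i / 8 &&& χ) := by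
  conv_lhs => rw [show i = 2 ^ 3 * (i / 8) + i % 8 by omega, show 8 * χ = 2 ^ 3 * χ + 0 by ring]
  rw [and_split _ _ (by omega) (by norm_num)]
  simp

lemma xor8_lt (x y : ℕ) (hx : x < 8) (hy : y < 8) : x ^^^ y < 8 := by
  have := Nat.xor_lt_two_pow (n := 3) (by omega : x < 2 ^ 3) (by omega : y < 2 ^ 3)
  omega

lemma sign_rel (u v g χ : ℕ) (h : u ^^^ v = g) :
    ((-1:ℝ)) ^ hw (v &&& χ) = (-1) ^ hw (u &&& χ) * (-1) ^ hw (g &&& χ) := by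
  have hv : v = u ^^^ g := by rw [← h, xor_cancel_left]
  rw [hv, Nat.and_xor_distrib_right, hw_xor_sign]

theorem stmt17_aux : ∀ a, ∀ k, k < rhoExp a → ∀ i j, i < 2 ^ a → j < 2 ^ a →
    Ddisp a k i j = Odisp a k i j := by
  intro a
  induction a using Nat.strong_induction_on with
  | _ a ih =>
    intro k hk i j hi hj
    rcases Nat.lt_or_ge a 4 with h4 | h4
    · obtain ⟨hg, hc⟩ := base_gamma_chi a h4 k hk
      have hO : Odisp a k i j = Edisp a k i j := by
        interval_cases a <;> rw [Odisp]
      rw [hO]; unfold Ddisp Edisp; rw [hg, hc]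
    · obtain ⟨b, rfl⟩ : ∃ b, a = b + 4 := ⟨a - 4, by omega⟩
      rw [rhoExp_step] at hk
      have h83 : (8:ℕ) ≤ 2 ^ (b + 3) :=
        le_trans (by norm_num) (Nat.pow_le_pow_right (by norm_num) (by omega : 3 ≤ b + 3))
      have h2half : (2:ℕ) ^ (b + 4) = 2 * 2 ^ (b + 3) := by ring
      have hhalf8 : (2:ℕ) ^ (b + 3) = 8 * 2 ^ b := by ring
      rw [Odisp]
      rcases Nat.lt_or_ge k 8 with h8 | h8
      · -- k < 8
        rw [if_pos h8]
        rcases Nat.eq_zero_or_pos k with hk0 | hk0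
        · -- k = 0
          subst hk0
          have hD : Ddisp (b + 4) 0 i j = if i = j then 1 else 0 := by
            unfold Ddisp
            rw [gammaO_zero, chiO_zero]
            simp [xor_eq_zero_iff, hw_zero]
          have hE : ∀ x y : ℕ, Edisp 3 0 x y = if x = y then 1 else 0 := by
            intro x y
            unfold Edisp
            rw [show psiHat 3 0 = 0 by decide]
            simp [xor_eq_zero_iff, hw_zero]
          rw [hD]
          by_cases hij : i = j
          · subst hij
            rw [if_pos rfl]
            rcases Nat.lt_or_ge i (2 ^ (b + 3)) with h | h
            · rw [if_pos (show i < 2 ^ (b + 3) ∧ i < 2 ^ (b + 3) from ⟨h, h⟩),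
                if_pos rfl, hE, if_pos rfl]
            · rw [if_neg (show ¬(i < 2 ^ (b + 3) ∧ i < 2 ^ (b + 3)) by omega),
                if_pos (show 2 ^ (b + 3) ≤ i ∧ 2 ^ (b + 3) ≤ i from ⟨h, h⟩),
                if_pos rfl, hE, if_pos rfl]
          · rw [if_neg hij]
            by_cases h1 : i < 2 ^ (b + 3) ∧ j < 2 ^ (b + 3)
            · rw [if_pos h1]
              by_cases h2 : i / 8 = j / 8
              · rw [if_pos h2, hE, if_neg (show ¬ i % 8 = j % 8 by omega)]
              · rw [if_neg h2]
            · rw [if_neg h1]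
              by_cases h3 : 2 ^ (b + 3) ≤ i ∧ 2 ^ (b + 3) ≤ j
              · rw [if_pos h3]
                by_cases h2 : (i - 2 ^ (b + 3)) / 8 = (j - 2 ^ (b + 3)) / 8
                · rw [if_pos h2, hE,
                    if_neg (show ¬ (j - 2 ^ (b + 3)) % 8 = (i - 2 ^ (b + 3)) % 8 by omega)]
                · rw [if_neg h2]
              · rw [if_neg h3]
        · -- 0 < k < 8
          unfold Ddisp
          rw [gammaO_small b k h8, chiO_small b k (by omega) h8]
          have hψ : psiHat 3 k < 8 := by have := psiHat_lt 3 k; omega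
          have hψh : psiHat 3 k < 2 ^ (b + 3) := by omega
          rcases Nat.lt_or_ge i (2 ^ (b + 3)) with hi1 | hi1 <;>
            rcases Nat.lt_or_ge j (2 ^ (b + 3)) with hj1 | hj1
          · -- both low
            rw [if_pos (show i < 2 ^ (b + 3) ∧ j < 2 ^ (b + 3) from ⟨hi1, hj1⟩)]
            have hsign : i &&& (2 ^ (b + 3) + psiHat 3 k) = i % 8 &&& psiHat 3 k := by
              rw [and_mix _ _ _ hi1 hψh, and_decomp8 _ _ hψ]
            have hiff : i ^^^ j = k ↔ (i / 8 = j / 8 ∧ i % 8 ^^^ j % 8 = k) := by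
              rw [xor_decomp8]
              constructor
              · intro h
                have hlow := xor8_lt (i % 8) (j % 8) (by omega) (by omega)
                have h0 : i / 8 ^^^ j / 8 = 0 := by omega
                exact ⟨xor_eq_zero_iff.mp h0, by omega⟩
              · rintro ⟨h1, h2⟩
                rw [xor_eq_zero_iff.mpr h1]
                omega
            by_cases hd : i / 8 = j / 8
            · rw [if_pos hd]
              unfold Edisp
              by_cases hl : i % 8 ^^^ j % 8 = k
              · rw [if_pos (show i ^^^ j = k from hiff.mpr ⟨hd, hl⟩), if_pos hl, hsign]
              · rw [if_neg (show ¬ i ^^^ j = k from fun h => hl (hiff.mp h).2), if_neg hl]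
            · rw [if_neg hd, if_neg (show ¬ i ^^^ j = k from fun h => hd (hiff.mp h).1)]
          · -- i low, j high
            rw [if_neg (show ¬(i < 2 ^ (b + 3) ∧ j < 2 ^ (b + 3)) by omega),
              if_neg (show ¬(2 ^ (b + 3) ≤ i ∧ 2 ^ (b + 3) ≤ j) by omega)]
            have hx : i ^^^ j = 2 ^ (b + 3) + (i ^^^ (j - 2 ^ (b + 3))) := by
              conv_lhs => rw [show j = 2 ^ (b + 3) + (j - 2 ^ (b + 3)) by omega]
              rw [xor_mix _ _ _ hi1 (by omega)]
            rw [if_neg (show ¬ i ^^^ j = k by omega)]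
          · -- i high, j low
            rw [if_neg (show ¬(i < 2 ^ (b + 3) ∧ j < 2 ^ (b + 3)) by omega),
              if_neg (show ¬(2 ^ (b + 3) ≤ i ∧ 2 ^ (b + 3) ≤ j) by omega)]
            have hx : i ^^^ j = 2 ^ (b + 3) + ((i - 2 ^ (b + 3)) ^^^ j) := by
              conv_lhs => rw [show i = 2 ^ (b + 3) + (i - 2 ^ (b + 3)) by omega]
              rw [xor_mix' _ _ _ (by omega) hj1]
            rw [if_neg (show ¬ i ^^^ j = k by omega)]
          · -- both high
            rw [if_neg (show ¬(i < 2 ^ (b + 3) ∧ j < 2 ^ (b + 3)) by omega),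
              if_pos (show 2 ^ (b + 3) ≤ i ∧ 2 ^ (b + 3) ≤ j from ⟨hi1, hj1⟩)]
            set i₀ := i - 2 ^ (b + 3) with hi₀
            set j₀ := j - 2 ^ (b + 3) with hj₀
            have hx : i ^^^ j = i₀ ^^^ j₀ := by
              conv_lhs => rw [show i = 2 ^ (b + 3) + i₀ by omega,
                show j = 2 ^ (b + 3) + j₀ by omega]
              rw [xor_hh _ _ _ (by omega) (by omega)]
            have hsign : hw (i &&& (2 ^ (b + 3) + psiHat 3 k))
                = 1 + hw (i₀ % 8 &&& psiHat 3 k) := by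
              rw [show i = 2 ^ (b + 3) + i₀ by omega, and_hh _ _ _ (by omega) hψh,
                hw_top _ _ (lt_of_le_of_lt Nat.and_le_right hψh), and_decomp8 _ _ hψ]
            have hiff : i₀ ^^^ j₀ = k ↔ (i₀ / 8 = j₀ / 8 ∧ i₀ % 8 ^^^ j₀ % 8 = k) := by
              rw [xor_decomp8]
              constructor
              · intro h
                have hlow := xor8_lt (i₀ % 8) (j₀ % 8) (by omega) (by omega)
                have h0 : i₀ / 8 ^^^ j₀ / 8 = 0 := by omega
                exact ⟨xor_eq_zero_iff.mp h0, by omega⟩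
              · rintro ⟨h1, h2⟩
                rw [xor_eq_zero_iff.mpr h1]
                omega
            rw [hx]
            by_cases hd : i₀ / 8 = j₀ / 8
            · rw [if_pos hd]
              unfold Edisp
              by_cases hl : i₀ % 8 ^^^ j₀ % 8 = k
              · rw [if_pos (show i₀ ^^^ j₀ = k from hiff.mpr ⟨hd, hl⟩),
                  if_pos (show j₀ % 8 ^^^ i₀ % 8 = k by rw [Nat.xor_comm]; exact hl), hsign]
                have hrel := sign_rel (i₀ % 8) (j₀ % 8) k (psiHat 3 k) hl
                rw [hrel, neg_one_pow_odd' (hw_and_psi3_odd k hk0 h8), pow_add]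
                ring
              · rw [if_neg (show ¬ i₀ ^^^ j₀ = k from fun h => hl (hiff.mp h).2),
                  if_neg (show ¬ j₀ % 8 ^^^ i₀ % 8 = k from
                    fun h => hl (by rw [Nat.xor_comm] at h; exact h))]
            · rw [if_neg hd, if_neg (show ¬ i₀ ^^^ j₀ = k from fun h => hd (hiff.mp h).1)]
      · -- k ≥ 8
        obtain ⟨k', rfl⟩ : ∃ k', k = 8 + k' := ⟨k - 8, by omega⟩
        rw [if_neg (show ¬ 8 + k' < 8 by omega), show 8 + k' - 8 = k' by omega]
        have hk' : k' < rhoExp b := by omega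
        unfold Ddisp
        rw [gammaO_step b k' hk', chiO_step b k' hk']
        set g := gammaO b k' with hgdef
        set χ := chiO b k' with hcdef
        have hglt : g < 2 ^ b := gammaO_lt b k' hk'
        have hclt : χ < 2 ^ b := chiO_lt b k' hk'
        have hglt8 : 8 * g < 2 ^ (b + 3) := by omega
        have hclt8 : 8 * χ < 2 ^ (b + 3) := by omega
        have hchi : ∀ x : ℕ, x < 2 ^ (b + 3) →
            x &&& ((if k' = 0 then 2 ^ (b + 3) else 0) + 8 * χ) = 8 * (x / 8 &&& χ) := by
          intro x hx
          by_cases h0 : k' = 0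
          · rw [if_pos h0, and_mix _ _ _ hx hclt8, and8_shift]
          · rw [if_neg h0, Nat.zero_add, and8_shift]
        have hchiH : ∀ x : ℕ, x < 2 ^ (b + 3) →
            hw ((2 ^ (b + 3) + x) &&& ((if k' = 0 then 2 ^ (b + 3) else 0) + 8 * χ))
              = (if k' = 0 then 1 else 0) + hw (x / 8 &&& χ) := by
          intro x hx
          by_cases h0 : k' = 0
          · rw [if_pos h0, if_pos h0, and_hh _ _ _ hx hclt8,
              hw_top _ _ (lt_of_le_of_lt Nat.and_le_left hx), and8_shift, hw_mul8]
          · rw [if_neg h0, if_neg h0, Nat.zero_add, and_mix' _ _ _ hx hclt8, and8_shift,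
              hw_mul8, Nat.zero_add]
        rcases Nat.lt_or_ge i (2 ^ (b + 3)) with hi1 | hi1 <;>
          rcases Nat.lt_or_ge j (2 ^ (b + 3)) with hj1 | hj1
        · -- both low : zero on both sides
          rw [if_neg (show ¬(i < 2 ^ (b + 3) ∧ 2 ^ (b + 3) ≤ j) by omega),
            if_neg (show ¬(2 ^ (b + 3) ≤ i ∧ j < 2 ^ (b + 3)) by omega)]
          have hx : i ^^^ j < 2 ^ (b + 3) := Nat.xor_lt_two_pow hi1 hj1
          rw [if_neg (show ¬ i ^^^ j = 2 ^ (b + 3) + 8 * g by omega)]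
        · -- i low, j high
          rw [if_pos (show i < 2 ^ (b + 3) ∧ 2 ^ (b + 3) ≤ j from ⟨hi1, hj1⟩)]
          set j₀ := j - 2 ^ (b + 3) with hj₀
          have hx : i ^^^ j = 2 ^ (b + 3) + (i ^^^ j₀) := by
            conv_lhs => rw [show j = 2 ^ (b + 3) + j₀ by omega]
            rw [xor_mix _ _ _ hi1 (by omega)]
          have hxd := xor_decomp8 i j₀
          have hlow8 := xor8_lt (i % 8) (j₀ % 8) (by omega) (by omega)
          have hiff : i ^^^ j = 2 ^ (b + 3) + 8 * g ↔
              (i % 8 = j₀ % 8 ∧ i / 8 ^^^ j₀ / 8 = g) := by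
            rw [hx]
            constructor
            · intro h
              have h1 : i ^^^ j₀ = 8 * g := by omega
              rw [hxd] at h1
              have h2 : i % 8 ^^^ j₀ % 8 = 0 := by omega
              exact ⟨xor_eq_zero_iff.mp h2, by omega⟩
            · rintro ⟨h1, h2⟩
              rw [hxd, h2, xor_eq_zero_iff.mpr h1]
              omega
          have hIH : Odisp b k' (i / 8) (j₀ / 8) = Ddisp b k' (i / 8) (j₀ / 8) :=
            (ih b (by omega) k' hk' (i / 8) (j₀ / 8) (by omega) (by omega)).symm
          by_cases hm : i % 8 = j₀ % 8
          · rw [if_pos hm, hIH]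
            unfold Ddisp
            rw [← hgdef, ← hcdef]
            by_cases hdv : i / 8 ^^^ j₀ / 8 = g
            · rw [if_pos (show i ^^^ j = 2 ^ (b + 3) + 8 * g from hiff.mpr ⟨hm, hdv⟩),
                if_pos hdv, hchi i hi1, hw_mul8]
            · rw [if_neg (show ¬ i ^^^ j = 2 ^ (b + 3) + 8 * g from
                  fun h => hdv (hiff.mp h).2), if_neg hdv]
          · rw [if_neg hm, if_neg (show ¬ i ^^^ j = 2 ^ (b + 3) + 8 * g from
                fun h => hm (hiff.mp h).1)]
        · -- i high, j low
          rw [if_neg (show ¬(i < 2 ^ (b + 3) ∧ 2 ^ (b + 3) ≤ j) by omega),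
            if_pos (show 2 ^ (b + 3) ≤ i ∧ j < 2 ^ (b + 3) from ⟨hi1, hj1⟩)]
          set i₀ := i - 2 ^ (b + 3) with hi₀
          have hx : i ^^^ j = 2 ^ (b + 3) + (i₀ ^^^ j) := by
            conv_lhs => rw [show i = 2 ^ (b + 3) + i₀ by omega]
            rw [xor_mix' _ _ _ (by omega) hj1]
          have hxd := xor_decomp8 i₀ j
          have hlow8 := xor8_lt (i₀ % 8) (j % 8) (by omega) (by omega)
          have hiff : i ^^^ j = 2 ^ (b + 3) + 8 * g ↔
              (i₀ % 8 = j % 8 ∧ i₀ / 8 ^^^ j / 8 = g) := by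
            rw [hx]
            constructor
            · intro h
              have h1 : i₀ ^^^ j = 8 * g := by omega
              rw [hxd] at h1
              have h2 : i₀ % 8 ^^^ j % 8 = 0 := by omega
              exact ⟨xor_eq_zero_iff.mp h2, by omega⟩
            · rintro ⟨h1, h2⟩
              rw [hxd, h2, xor_eq_zero_iff.mpr h1]
              omega
          have hIH : Odisp b k' (j / 8) (i₀ / 8) = Ddisp b k' (j / 8) (i₀ / 8) :=
            (ih b (by omega) k' hk' (j / 8) (i₀ / 8) (by omega) (by omega)).symm
          by_cases hm : i₀ % 8 = j % 8
          · rw [if_pos hm, hIH]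
            unfold Ddisp
            rw [← hgdef, ← hcdef]
            by_cases hdv : i₀ / 8 ^^^ j / 8 = g
            · rw [if_pos (show i ^^^ j = 2 ^ (b + 3) + 8 * g from hiff.mpr ⟨hm, hdv⟩),
                if_pos (show j / 8 ^^^ i₀ / 8 = g by rw [Nat.xor_comm]; exact hdv)]
              rw [show i = 2 ^ (b + 3) + i₀ by omega, hchiH i₀ (by omega)]
              by_cases h0 : k' = 0
              · rw [if_pos h0]
                have hg0 : g = 0 := by rw [hgdef, h0, gammaO_zero]
                have hc0 : χ = 0 := by rw [hcdef, h0, chiO_zero]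
                rw [hc0]
                simp [hw_zero, pow_add]
              · rw [if_neg h0, Nat.zero_add]
                have hrel := sign_rel (j / 8) (i₀ / 8) g χ
                  (by rw [Nat.xor_comm]; exact hdv)
                have hpar : ((-1:ℝ)) ^ hw (g &&& χ) = -1 :=
                  neg_one_pow_odd' (key_parity b k' (by omega) hk')
                rw [hrel, hpar]
                ring
            · rw [if_neg (show ¬ i ^^^ j = 2 ^ (b + 3) + 8 * g from
                  fun h => hdv (hiff.mp h).2),
                if_neg (show ¬ j / 8 ^^^ i₀ / 8 = g from
                  fun h => hdv (by rw [Nat.xor_comm] at h; exact h))]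
              simp
          · rw [if_neg hm, if_neg (show ¬ i ^^^ j = 2 ^ (b + 3) + 8 * g from
                fun h => hm (hiff.mp h).1)]
        · -- both high : zero on both sides
          rw [if_neg (show ¬(i < 2 ^ (b + 3) ∧ 2 ^ (b + 3) ≤ j) by omega),
            if_neg (show ¬(2 ^ (b + 3) ≤ i ∧ j < 2 ^ (b + 3)) by omega)]
          have hx : i ^^^ j = (i - 2 ^ (b + 3)) ^^^ (j - 2 ^ (b + 3)) := by
            conv_lhs => rw [show i = 2 ^ (b + 3) + (i - 2 ^ (b + 3)) by omega,
              show j = 2 ^ (b + 3) + (j - 2 ^ (b + 3)) by omega]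
            rw [xor_hh _ _ _ (by omega) (by omega)]
          have hlt : (i - 2 ^ (b + 3)) ^^^ (j - 2 ^ (b + 3)) < 2 ^ (b + 3) :=
            Nat.xor_lt_two_pow (by omega) (by omega)
          rw [if_neg (show ¬ i ^^^ j = 2 ^ (b + 3) + 8 * g by omega)]


/-- for every `a` and every `k < ρ(2^a)`, the `k`-th dispersion matrix of
the design `A_{2^a}` (built from the Octonion maps `(γ_t, χ_t)`) equals the `k`-th
dispersion matrix of the Adams–Lax–Phillips Octonion design `O_{2^a}^{(O)}`. -/
theorem stmt17 (a k : ℕ) (hk : k < rhoExp a) (i j : ℕ)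
    (hi : i < 2 ^ a) (hj : j < 2 ^ a) :
    Ddisp a k i j = Odisp a k i j := by
  exact stmt17_aux a k hk i j hi hj
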